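/- arXiv:1912.08835 — 3 statements merged into one kernel-verified Lean document; each statement's English description precedes it below -/
import Mathlib

section
/- Let G be a finite group. If V(K,G) is a CI-S-ring for every K ∈ Sup_2^min(G_r), then G is a DCI-group. -/
open Pointwise

/-! ### Cayley digraphs and CI-subsets (groups written additively) -/

/-- The arc set `R(S) = {(g, s+g) : g ∈ G, s ∈ S}` of the Cayley digraph `Cay(G,S)`. -/
def arcs {G : Type*} [AddGroup G] (S : Set G) : Set (G × G) :=
  {a | ∃ s ∈ S, a.2 = s + a.1}

/-- The image `R^f` of a set of arcs under a permutation `f`. -/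
def pmap {G : Type*} (f : Equiv.Perm G) (R : Set (G × G)) : Set (G × G) :=
  (fun a => (f a.1, f a.2)) '' R

/-- `S ⊆ G` is a CI-subset: every Cayley digraph isomorphic to `Cay(G,S)` is Cayley
isomorphic to it. -/
def IsCISubset {G : Type*} [AddGroup G] (S : Set G) : Prop :=
  ∀ T : Set G, (∃ f : Equiv.Perm G, pmap f (arcs S) = arcs T) →
    ∃ φ : G ≃+ G, ⇑φ '' S = T

/-- `G` is a DCI-group: every subset of `G` is a CI-subset. -/
def IsDCI (G : Type*) [AddGroup G] : Prop := ∀ S : Set G, IsCISubset S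

/-! ### S-rings, given by their partitions into basic sets.

The condition that the ℤ-span of the blocks is a subring of the group ring is encoded
combinatorially: the number of ways to write an element as a sum `x + y` with `x ∈ X`,
`y ∈ Y` (for blocks `X, Y`) is constant on each block. -/

structure SRing (G : Type*) [AddGroup G] where
  blocks : Set (Set G)
  nonempty_mem : ∀ X ∈ blocks, X.Nonempty
  existsUnique_mem : ∀ g : G, ∃! X, X ∈ blocks ∧ g ∈ X
  zero_mem : ({0} : Set G) ∈ blocks
  neg_mem : ∀ X ∈ blocks, -X ∈ blocks
  count_const : ∀ X ∈ blocks, ∀ Y ∈ blocks, ∀ Z ∈ blocks, ∀ z ∈ Z, ∀ z' ∈ Z,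
    {a : G × G | a.1 ∈ X ∧ a.2 ∈ Y ∧ a.1 + a.2 = z}.ncard =
      {a : G × G | a.1 ∈ X ∧ a.2 ∈ Y ∧ a.1 + a.2 = z'}.ncard

/-- The automorphisms of an S-ring with family of basic sets `Bl`:
permutations preserving each arc set `R(X)`, `X ∈ Bl`. -/
def autPerm {G : Type*} [AddGroup G] (Bl : Set (Set G)) : Set (Equiv.Perm G) :=
  {f | ∀ X ∈ Bl, pmap f (arcs X) = arcs X}

/-- The isomorphisms from an S-ring with basic sets `Bl` onto some S-ring over `G`. -/
def isoPerm {G : Type*} [AddGroup G] (Bl : Set (Set G)) : Set (Equiv.Perm G) :=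
  {f | ∃ B : SRing G,
    {R | ∃ X ∈ Bl, R = pmap f (arcs X)} = {R | ∃ Y ∈ B.blocks, R = arcs Y}}

/-- An S-ring is CI if `iso(A) = Aut(A)Aut(G)` (composition: first the S-ring
automorphism, then the group automorphism). -/
def IsCIBlocks {G : Type*} [AddGroup G] (Bl : Set (Set G)) : Prop :=
  isoPerm Bl = {f | ∃ γ ∈ autPerm Bl, ∃ φ : G ≃+ G, ∀ x, f x = φ (γ x)}

/-- The right translation `x ↦ x + g` as a permutation. -/
def addRightPerm {G : Type*} [AddGroup G] (g : G) : Equiv.Perm G := Equiv.addRight g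

/-- `G_r`, the set of right translations of `G`. -/
def rSet (G : Type*) [AddGroup G] : Set (Equiv.Perm G) := Set.range addRightPerm

/-- The basic sets of `V(K,G)`: the orbits on `G` of the stabilizer `K_e` of the
identity in `K`. -/
def VBlocks {G : Type*} [AddGroup G] (K : Set (Equiv.Perm G)) : Set (Set G) :=
  {O | ∃ g : G, O = {h | ∃ k ∈ K, k 0 = 0 ∧ k g = h}}

/-- An S-ring is schurian if it equals `V(K,G)` for some `G_r ≤ K ≤ Sym(G)`. -/
def IsSchurianBlocks {G : Type*} [AddGroup G] (Bl : Set (Set G)) : Prop :=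
  ∃ K : Subgroup (Equiv.Perm G), rSet G ⊆ (K : Set (Equiv.Perm G)) ∧
    Bl = VBlocks (K : Set (Equiv.Perm G))

/-- `f` lies in the 2-closure of `K`: on every pair it agrees with some member of `K`. -/
def in2Closure {G : Type*} (K : Set (Equiv.Perm G)) (f : Equiv.Perm G) : Prop :=
  ∀ a b : G, ∃ k ∈ K, k a = f a ∧ k b = f b

/-- `K` is 2-closed: `K = K^(2)`. -/
def Is2Closed {G : Type*} (K : Subgroup (Equiv.Perm G)) : Prop :=
  ∀ f, in2Closure (K : Set (Equiv.Perm G)) f → f ∈ K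

/-- Conjugate `S^γ` of a set of permutations. -/
def conjSet {G : Type*} (γ : Equiv.Perm G) (S : Set (Equiv.Perm G)) : Set (Equiv.Perm G) :=
  (fun s => γ⁻¹ * s * γ) '' S

/-- `K1 ⪯_G K2`: `K1` is a `G`-complete subgroup of `K2`. -/
def GComplete {G : Type*} [AddGroup G] (K1 K2 : Subgroup (Equiv.Perm G)) : Prop :=
  K1 ≤ K2 ∧ ∀ γ : Equiv.Perm G, conjSet γ (rSet G) ⊆ (K2 : Set (Equiv.Perm G)) →
    ∃ δ ∈ K2, conjSet δ (conjSet γ (rSet G)) ⊆ (K1 : Set (Equiv.Perm G))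

/-- `K ∈ Sup_2(G_r)`: `K` is a 2-closed subgroup of `Sym(G)` containing `G_r`. -/
def InSup2 {G : Type*} [AddGroup G] (K : Subgroup (Equiv.Perm G)) : Prop :=
  rSet G ⊆ (K : Set (Equiv.Perm G)) ∧ Is2Closed K

/-- `K ∈ Sup_2^min(G_r)`: `K` is a minimal element of `(Sup_2(G_r), ⪯_G)`. -/
def InSup2Min {G : Type*} [AddGroup G] (K : Subgroup (Equiv.Perm G)) : Prop :=
  InSup2 K ∧ ∀ K' : Subgroup (Equiv.Perm G), InSup2 K' → GComplete K' K → K' = K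

/-! ### A-sets, A-subgroups, sections, radicals, products -/

/-- `X` is an `A`-set: a union of basic sets. -/
def IsASet {G : Type*} [AddGroup G] (Bl : Set (Set G)) (X : Set G) : Prop :=
  ∃ C ⊆ Bl, X = ⋃₀ C

/-- An `A`-subgroup. -/
def IsASubgroup {G : Type*} [AddGroup G] (Bl : Set (Set G)) (U : AddSubgroup G) : Prop :=
  IsASet Bl (U : Set G)

/-- The radical `rad(X) = {g : g + X = X + g = X}`. -/
def radSet {G : Type*} [AddGroup G] (X : Set G) : Set G :=
  {g | (fun x => g + x) '' X = X ∧ (fun x => x + g) '' X = X}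

/-- `A` is the `S`-wreath (generalized wreath) product for the section `S = U/L`. -/
def IsWreath {G : Type*} [AddGroup G] (Bl : Set (Set G)) (U L : AddSubgroup G) : Prop :=
  IsASubgroup Bl U ∧ IsASubgroup Bl L ∧ L ≤ U ∧ L.Normal ∧
    ∀ X ∈ Bl, ¬X ⊆ (U : Set G) → (L : Set G) ⊆ radSet X

/-- Nontrivial (proper) `S`-wreath product. -/
def IsNontrivialWreath {G : Type*} [AddGroup G] (Bl : Set (Set G))
    (U L : AddSubgroup G) : Prop :=
  IsWreath Bl U L ∧ L ≠ ⊥ ∧ U ≠ ⊤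

/-- `A` is decomposable: a nontrivial generalized wreath product. -/
def IsDecomposable {G : Type*} [AddGroup G] (Bl : Set (Set G)) : Prop :=
  ∃ U L : AddSubgroup G, IsNontrivialWreath Bl U L

/-! ### Cyclotomic S-rings, Cayley minimality, 2-minimality, normality -/

/-- The set of orbits on `G` of a group `M` of automorphisms of `G`. -/
def autOrbits {G : Type*} [AddGroup G] (M : AddSubgroup (AddAut G)) : Set (Set G) :=
  {O | ∃ g : G, O = {h | ∃ φ ∈ M, φ g = h}}

/-- An S-ring is cyclotomic if its basic sets are the orbits of a group of
automorphisms of `G`. -/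
def IsCyclotomic {G : Type*} [AddGroup G] (Bl : Set (Set G)) : Prop :=
  ∃ M : AddSubgroup (AddAut G), Bl = autOrbits M

/-- `aut_G(A) = Aut(A) ∩ Aut(G)`. -/
def autAddSet {G : Type*} [AddGroup G] (Bl : Set (Set G)) : Set (AddAut G) :=
  {φ | (φ : G ≃+ G).toEquiv ∈ autPerm Bl}

/-- Two sets of automorphisms have the same orbits on `G`. -/
def sameAutOrbits {G : Type*} [AddGroup G] (K M : Set (AddAut G)) : Prop :=
  ∀ g : G, {h | ∃ φ ∈ K, φ g = h} = {h | ∃ φ ∈ M, φ g = h}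

/-- A (cyclotomic) S-ring is Cayley minimal if the only subgroup of `Aut(G)` Cayley
equivalent to `aut_G(A)` is `aut_G(A)` itself. -/
def IsCayleyMinimal {G : Type*} [AddGroup G] (Bl : Set (Set G)) : Prop :=
  IsCyclotomic Bl ∧ ∀ K : AddSubgroup (AddAut G),
    sameAutOrbits (K : Set (AddAut G)) (autAddSet Bl) →
      (K : Set (AddAut G)) = autAddSet Bl

/-- Two sets of permutations have the same orbits on `G × G`. -/
def samePairOrbits {G : Type*} (K M : Set (Equiv.Perm G)) : Prop :=
  ∀ a b : G, {c : G × G | ∃ f ∈ K, (f a, f b) = c} = {c : G × G | ∃ f ∈ M, (f a, f b) = c}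

/-- An S-ring is 2-minimal if the only subgroup of `Sym(G)` containing `G_r` and
2-equivalent to `Aut(A)` is `Aut(A)` itself. -/
def Is2Minimal {G : Type*} [AddGroup G] (Bl : Set (Set G)) : Prop :=
  ∀ K : Subgroup (Equiv.Perm G), rSet G ⊆ (K : Set (Equiv.Perm G)) →
    samePairOrbits (K : Set (Equiv.Perm G)) (autPerm Bl) →
      (K : Set (Equiv.Perm G)) = autPerm Bl

/-- An S-ring is normal if `G_r` is normal in `Aut(A)`. -/
def IsNormalBlocks {G : Type*} [AddGroup G] (Bl : Set (Set G)) : Prop :=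
  ∀ σ ∈ autPerm Bl, ∀ t ∈ rSet G, σ * t * σ⁻¹ ∈ rSet G

/-- A set of permutations normalizes another one. -/
def normalizesInto {M : Type*} [Group M] (Δ N : Set M) : Prop :=
  ∀ σ ∈ Δ, ∀ t ∈ N, σ * t * σ⁻¹ ∈ N

/-! ### Kernels, restriction to subgroups, quotients and sections -/

/-- `Aut(A)_{G/L}`: the automorphisms of the S-ring fixing every `L`-coset setwise. -/
def kernelPerm {G : Type*} [AddGroup G] (Bl : Set (Set G)) (L : AddSubgroup G) :
    Set (Equiv.Perm G) :=
  {f | f ∈ autPerm Bl ∧ ∀ g : G, ⇑f '' ((L : Set G) + {g}) = (L : Set G) + {g}}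

/-- The basic sets of `A_U` (for an `A`-subgroup `U`), as subsets of `U`. -/
def subBlocks {G : Type*} [AddGroup G] (Bl : Set (Set G)) (U : AddSubgroup G) :
    Set (Set U) :=
  {Z | ∃ X ∈ Bl, X ⊆ (U : Set G) ∧ Z = ((Subtype.val) ⁻¹' X : Set U)}

/-- The basic sets of `A_{G/L}`: images of basic sets under `G → G/L`. -/
def quotBlocks {G : Type*} [AddGroup G] (Bl : Set (Set G)) (L : AddSubgroup G) :
    Set (Set (G ⧸ L)) :=
  {Z | ∃ X ∈ Bl, Z = (QuotientAddGroup.mk : G → G ⧸ L) '' X}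

/-- The basic sets of `A_S` for the section `S = U/L`: images under `U → U/L` of the
basic sets contained in `U`. -/
def secBlocks {G : Type*} [AddGroup G] (Bl : Set (Set G)) (U L : AddSubgroup G) :
    Set (Set (U ⧸ L.addSubgroupOf U)) :=
  {Z | ∃ X ∈ Bl, X ⊆ (U : Set G) ∧
    Z = (QuotientAddGroup.mk : U → U ⧸ L.addSubgroupOf U) '' {u : U | (u : G) ∈ X}}

/-- The permutations of an (invariant) subgroup `U` induced by members of `F`. -/
def inducedPerm {G : Type*} [AddGroup G] (F : Set (Equiv.Perm G)) (U : AddSubgroup G) :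
    Set (Equiv.Perm U) :=
  {σ | ∃ f ∈ F, ∀ x : U, (σ x : G) = f (x : G)}

/-- The automorphisms of an (invariant) subgroup `U` induced by members of `F ⊆ Aut(G)`. -/
def inducedAddAut {G : Type*} [AddGroup G] (F : Set (AddAut G)) (U : AddSubgroup G) :
    Set (AddAut U) :=
  {σ | ∃ φ ∈ F, ∀ x : U, ((σ x : U) : G) = φ (x : G)}

/-- `S^f = S`: the permutation `f` maps `U` onto itself and permutes the `L`-cosets
inside `U`. -/
def secInvariant {G : Type*} [AddGroup G] (f : Equiv.Perm G) (U L : AddSubgroup G) : Prop :=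
  ⇑f '' (U : Set G) = (U : Set G) ∧
    ∀ u ∈ U, ⇑f '' ((L : Set G) + {u}) = (L : Set G) + {f u}

/-- `σ` is the bijection `f^S` of the section `S = U/L` induced by `f`. -/
def inducesOnSec {G : Type*} [AddGroup G] (f : Equiv.Perm G) (U L : AddSubgroup G)
    (σ : Equiv.Perm (U ⧸ L.addSubgroupOf U)) : Prop :=
  ∀ u v : U, f (u : G) = (v : G) →
    σ (QuotientAddGroup.mk u) = QuotientAddGroup.mk v

/-- `Δ^S`: the bijections of the section `S = U/L` induced by members of `Δ`
leaving `S` invariant. -/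
def secPerms {G : Type*} [AddGroup G] (F : Set (Equiv.Perm G)) (U L : AddSubgroup G) :
    Set (Equiv.Perm (U ⧸ L.addSubgroupOf U)) :=
  {σ | ∃ f ∈ F, secInvariant f U L ∧ inducesOnSec f U L σ}

/-- `K^S` for `K ≤ Aut(U)`: automorphisms of `S = U/L` induced by members of `K`. -/
def secAutOfSub {G : Type*} [AddCommGroup G] (U L : AddSubgroup G)
    (K : Set (AddAut U)) : Set (AddAut (U ⧸ L.addSubgroupOf U)) :=
  {ψ | ∃ φ ∈ K, ∀ u : U, ψ (QuotientAddGroup.mk u) = QuotientAddGroup.mk (φ u)}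

/-- `K^S` for `K ≤ Aut(G/L)`: automorphisms of `S = U/L` obtained by restricting
members of `K`. -/
def secAutOfQuot {G : Type*} [AddCommGroup G] (U L : AddSubgroup G)
    (K : Set (AddAut (G ⧸ L))) : Set (AddAut (U ⧸ L.addSubgroupOf U)) :=
  {ψ | ∃ φ ∈ K, ∀ u v : U,
    φ (QuotientAddGroup.mk (u : G)) = QuotientAddGroup.mk (v : G) →
      ψ (QuotientAddGroup.mk u) = QuotientAddGroup.mk v}

/-! ### p-S-rings and some particular S-rings -/

/-- A `p`-S-ring: all basic sets have `p`-power size. -/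
def IsPSRing {G : Type*} [AddGroup G] (p : ℕ) (Bl : Set (Set G)) : Prop :=
  ∀ X ∈ Bl, ∃ k : ℕ, X.ncard = p ^ k

/-- The family `Bl` of basic sets is that of `ℤC_p ≀ ℤC_p ≀ ℤC_p`: singletons in `B1`,
`B1`-cosets in `B2 \ B1`, and `B2`-cosets outside `B2`. -/
def IsWr3Blocks {G : Type*} [AddGroup G] (p : ℕ) (Bl : Set (Set G)) : Prop :=
  ∃ B1 B2 : AddSubgroup G, B1 < B2 ∧ (B1 : Set G).ncard = p ∧
    (B2 : Set G).ncard = p ^ 2 ∧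
    ∀ X : Set G, X ∈ Bl ↔
      ((∃ x ∈ B1, X = {x}) ∨
        (∃ x ∈ (B2 : Set G) \ (B1 : Set G), X = (B1 : Set G) + {x}) ∨
        (∃ x ∈ (Set.univ : Set G) \ (B2 : Set G), X = (B2 : Set G) + {x}))

/-- The family `Bl` of basic sets is that of `ℤC_p ≀ ℤC_p²`: singletons in `B1` and
`B1`-cosets outside `B1`. -/
def IsWrCpCp2Blocks {G : Type*} [AddGroup G] (p : ℕ) (Bl : Set (Set G)) : Prop :=
  ∃ B1 : AddSubgroup G, (B1 : Set G).ncard = p ∧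
    ∀ X : Set G, X ∈ Bl ↔
      ((∃ x ∈ B1, X = {x}) ∨ (∃ x : G, x ∉ B1 ∧ X = (B1 : Set G) + {x}))

/-- The unipotent map `σ(x,y,z) = (x, x+y, y+z)` on `(ℤ/p)³` defining `D_p`. -/
def dpStep (p : ℕ) (v : Fin 3 → ZMod p) : Fin 3 → ZMod p :=
  ![v 0, v 0 + v 1, v 1 + v 2]

/-- The orbit of a point under the cyclic group generated by `σ`. -/
def dpOrbit (p : ℕ) (x : Fin 3 → ZMod p) : Set (Fin 3 → ZMod p) :=
  {y | ∃ k : ℕ, (dpStep p)^[k] x = y}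

/-- The family `Bl` of basic sets is (isomorphic to) that of the S-ring `D_p`. -/
def IsDpBlocks {W : Type*} [AddGroup W] (p : ℕ) (Bl : Set (Set W)) : Prop :=
  ∃ e : W ≃+ (Fin 3 → ZMod p), (fun X => ⇑e '' X) '' Bl = Set.range (dpOrbit p)

/-! ### Cayley graph automorphisms and regular subgroups -/

/-- `Aut(Cay(G,X))`. -/
def autCaySet {G : Type*} [AddGroup G] (X : Set G) : Set (Equiv.Perm G) :=
  {f | pmap f (arcs X) = arcs X}

/-- A regular subgroup of `Sym(G)`: transitive, and only the identity has a fixed point. -/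
def IsRegularSubgroup {G : Type*} (K : Subgroup (Equiv.Perm G)) : Prop :=
  (∀ a b : G, ∃ k ∈ K, k a = b) ∧ ∀ k ∈ K, (∃ a : G, k a = a) → k = 1

/-! ### The groups `C_p^4 × C_q` -/

/-- The Sylow `p`-subgroup `P` of `C_p^4 × C_q`. -/
def Psub (p q : ℕ) : AddSubgroup ((Fin 4 → ZMod p) × ZMod q) :=
  (⊤ : AddSubgroup (Fin 4 → ZMod p)).prod ⊥

/-- The Sylow `q`-subgroup `Q` of `C_p^4 × C_q`. -/
def Qsub (p q : ℕ) : AddSubgroup ((Fin 4 → ZMod p) × ZMod q) :=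
  (⊥ : AddSubgroup (Fin 4 → ZMod p)).prod ⊤


/-! ### Auxiliary lemmas for Statement 2 -/

section AuxStatement2

set_option linter.unusedSectionVars false

variable {G : Type*} [AddGroup G]

lemma mem_arcs {S : Set G} {p : G × G} : p ∈ arcs S ↔ p.2 - p.1 ∈ S := by
  constructor
  · rintro ⟨s, hs, h⟩
    simpa [h] using hs
  · intro h
    exact ⟨p.2 - p.1, h, (sub_add_cancel _ _).symm⟩

lemma arcs_inj {S T : Set G} (h : arcs S = arcs T) : S = T := by
  ext x
  have := Set.ext_iff.1 h (0, x)
  simpa [mem_arcs] using this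

lemma pmap_pmap (f g : Equiv.Perm G) (R : Set (G × G)) :
    pmap f (pmap g R) = pmap (f * g) R := by
  unfold pmap; rw [← Set.image_comp]; rfl

lemma pmap_one (R : Set (G × G)) : pmap (1 : Equiv.Perm G) R = R := by
  unfold pmap; simp

lemma pmap_addRight (c : G) (S : Set G) :
    pmap (addRightPerm c) (arcs S) = arcs S := by
  ext p
  constructor
  · rintro ⟨q, hq, rfl⟩
    rw [mem_arcs] at hq ⊢
    simpa [addRightPerm, add_sub_add_right_eq_sub] using hq
  · intro hp
    refine ⟨(p.1 - c, p.2 - c), ?_, ?_⟩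
    · rw [mem_arcs] at hp ⊢
      simpa [sub_sub_sub_cancel_right] using hp
    · simp [addRightPerm, sub_add_cancel]

lemma pmap_inv_eq {f : Equiv.Perm G} {R R' : Set (G × G)} (h : pmap f R = R') :
    pmap f⁻¹ R' = R := by
  rw [← h, pmap_pmap, inv_mul_cancel, pmap_one]

/-- The orbit of `g` under the stabilizer of `0` in `K`. -/
def orb (K : Set (Equiv.Perm G)) (g : G) : Set G := {h | ∃ k ∈ K, k 0 = 0 ∧ k g = h}

lemma mem_VBlocks {K : Set (Equiv.Perm G)} {X : Set G} :
    X ∈ VBlocks K ↔ ∃ g, X = orb K g := Iff.rfl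

variable {K : Subgroup (Equiv.Perm G)}

lemma self_mem_orb (g : G) : g ∈ orb (K : Set (Equiv.Perm G)) g :=
  ⟨1, K.one_mem, rfl, rfl⟩

lemma stab_smul_orb {k : Equiv.Perm G} (hk : k ∈ K) (h0 : k 0 = 0) {g x : G}
    (hx : x ∈ orb (K : Set (Equiv.Perm G)) g) : k x ∈ orb (K : Set (Equiv.Perm G)) g := by
  obtain ⟨m, hm, hm0, hmg⟩ := hx
  exact ⟨k * m, K.mul_mem hk hm, by simp [Equiv.Perm.mul_apply, hm0, h0],
    by simp [Equiv.Perm.mul_apply, hmg]⟩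

lemma inv_stab {k : Equiv.Perm G} (h0 : k 0 = 0) : k⁻¹ 0 = 0 := by
  conv_lhs => rw [← h0]
  simp

lemma orb_eq_of_mem {g h : G} (hh : h ∈ orb (K : Set (Equiv.Perm G)) g) :
    orb (K : Set (Equiv.Perm G)) h = orb (K : Set (Equiv.Perm G)) g := by
  obtain ⟨k, hk, hk0, hkg⟩ := hh
  ext x
  constructor
  · rintro ⟨m, hm, hm0, rfl⟩
    exact ⟨m * k, K.mul_mem hm hk, by simp [Equiv.Perm.mul_apply, hk0, hm0],
      by simp [Equiv.Perm.mul_apply, hkg]⟩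
  · rintro ⟨m, hm, hm0, rfl⟩
    refine ⟨m * k⁻¹, K.mul_mem hm (K.inv_mem hk),
      by simp [Equiv.Perm.mul_apply, inv_stab hk0, hm0], ?_⟩
    have : k⁻¹ h = g := by rw [← hkg]; simp
    simp [Equiv.Perm.mul_apply, this]

lemma addRightPerm_mem (hK : rSet G ⊆ (K : Set (Equiv.Perm G))) (c : G) :
    addRightPerm c ∈ K := hK ⟨c, rfl⟩

lemma key_sub (hK : rSet G ⊆ (K : Set (Equiv.Perm G))) {k : Equiv.Perm G} (hk : k ∈ K)
    {g c d : G} (h : d - c ∈ orb (K : Set (Equiv.Perm G)) g) :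
    k d - k c ∈ orb (K : Set (Equiv.Perm G)) g := by
  set m : Equiv.Perm G := addRightPerm (-(k c)) * k * addRightPerm c with hm
  have hmK : m ∈ K := K.mul_mem (K.mul_mem (addRightPerm_mem hK _) hk) (addRightPerm_mem hK _)
  have hma : ∀ x : G, m x = k (x + c) - k c := by
    intro x
    simp [hm, addRightPerm, Equiv.Perm.mul_apply, sub_eq_add_neg]
  have hm0 : m 0 = 0 := by rw [hma]; simp
  have := stab_smul_orb hmK hm0 h
  rwa [hma, sub_add_cancel] at this

lemma neg_orb (hK : rSet G ⊆ (K : Set (Equiv.Perm G))) {x g : G}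
    (hx : x ∈ orb (K : Set (Equiv.Perm G)) g) : -x ∈ orb (K : Set (Equiv.Perm G)) (-g) := by
  obtain ⟨k, hk, hk0, hkg⟩ := hx
  have h1 : (0 : G) - g ∈ orb (K : Set (Equiv.Perm G)) (-g) := by
    rw [zero_sub]; exact self_mem_orb _
  have := key_sub hK hk h1
  rwa [hk0, hkg, zero_sub] at this

lemma orb_neg (hK : rSet G ⊆ (K : Set (Equiv.Perm G))) (g : G) :
    orb (K : Set (Equiv.Perm G)) (-g) = -(orb (K : Set (Equiv.Perm G)) g) := by
  ext x
  rw [Set.mem_neg]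
  constructor
  · intro hx
    have := neg_orb hK hx
    rwa [neg_neg] at this
  · intro hx
    have := neg_orb hK hx
    rwa [neg_neg] at this

lemma orb_zero : orb (K : Set (Equiv.Perm G)) (0 : G) = {0} := by
  ext x
  constructor
  · rintro ⟨k, hk, hk0, rfl⟩
    simp [hk0]
  · rintro rfl
    exact self_mem_orb 0

lemma count_const_orb (hK : rSet G ⊆ (K : Set (Equiv.Perm G)))
    {x0 y0 z0 z z' : G} (hz : z ∈ orb (K : Set (Equiv.Perm G)) z0)
    (hz' : z' ∈ orb (K : Set (Equiv.Perm G)) z0) :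
    {a : G × G | a.1 ∈ orb (K : Set (Equiv.Perm G)) x0 ∧
        a.2 ∈ orb (K : Set (Equiv.Perm G)) y0 ∧ a.1 + a.2 = z}.ncard =
      {a : G × G | a.1 ∈ orb (K : Set (Equiv.Perm G)) x0 ∧
        a.2 ∈ orb (K : Set (Equiv.Perm G)) y0 ∧ a.1 + a.2 = z'}.ncard := by
  obtain ⟨k1, hk1, h10, h1z⟩ := hz
  obtain ⟨k2, hk2, h20, h2z⟩ := hz'
  set k : Equiv.Perm G := k2 * k1⁻¹ with hkdef
  have hk : k ∈ K := K.mul_mem hk2 (K.inv_mem hk1)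
  have hk0 : k 0 = 0 := by simp [hkdef, Equiv.Perm.mul_apply, inv_stab h10, h20]
  have hkz : k z = z' := by
    have : k1⁻¹ z = z0 := by rw [← h1z]; simp
    simp [hkdef, Equiv.Perm.mul_apply, this, h2z]
  set A1 := {a : G × G | a.1 ∈ orb (K : Set (Equiv.Perm G)) x0 ∧
    a.2 ∈ orb (K : Set (Equiv.Perm G)) y0 ∧ a.1 + a.2 = z} with hA1
  set A2 := {a : G × G | a.1 ∈ orb (K : Set (Equiv.Perm G)) x0 ∧
    a.2 ∈ orb (K : Set (Equiv.Perm G)) y0 ∧ a.1 + a.2 = z'} with hA2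
  set F : G × G → G × G := fun a => (z' - k a.2, k a.2) with hF
  have himg : F '' A1 = A2 := by
    ext b
    constructor
    · rintro ⟨a, ⟨ha1, ha2, ha3⟩, rfl⟩
      have haz : a.1 = z - a.2 := eq_sub_of_add_eq ha3
      refine ⟨?_, stab_smul_orb hk hk0 ha2, sub_add_cancel _ _⟩
      have : k z - k a.2 ∈ orb (K : Set (Equiv.Perm G)) x0 :=
        key_sub hK hk (by rw [← haz]; exact ha1)
      simpa [hkz] using this
    · rintro ⟨hb1, hb2, hb3⟩
      refine ⟨(z - k⁻¹ b.2, k⁻¹ b.2), ⟨?_, stab_smul_orb (K.inv_mem hk) (inv_stab hk0) hb2,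
        sub_add_cancel _ _⟩, ?_⟩
      · have hbz : b.1 = z' - b.2 := eq_sub_of_add_eq hb3
        have : k⁻¹ z' - k⁻¹ b.2 ∈ orb (K : Set (Equiv.Perm G)) x0 :=
          key_sub hK (K.inv_mem hk) (by rw [← hbz]; exact hb1)
        have hkz' : k⁻¹ z' = z := by rw [← hkz]; simp
        rwa [hkz'] at this
      · have hbz : b.1 = z' - b.2 := eq_sub_of_add_eq hb3
        simp [hF, Equiv.Perm.inv_def, ← hbz]
  have hinj : Set.InjOn F A1 := by
    rintro a ⟨_, _, ha3⟩ b ⟨_, _, hb3⟩ hab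
    have h2 : k a.2 = k b.2 := congrArg Prod.snd hab
    have h2' : a.2 = b.2 := k.injective h2
    have : a.1 = b.1 := by
      rw [eq_sub_of_add_eq ha3, eq_sub_of_add_eq hb3, h2']
    exact Prod.ext this h2'
  rw [← himg, Set.ncard_image_of_injOn hinj]

/-- `V(K,G)` as an S-ring, for `G_r ≤ K`. -/
def sringOf (K : Subgroup (Equiv.Perm G)) (hK : rSet G ⊆ (K : Set (Equiv.Perm G))) :
    SRing G where
  blocks := VBlocks (K : Set (Equiv.Perm G))
  nonempty_mem := by
    rintro X ⟨g, rfl⟩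
    exact ⟨g, self_mem_orb g⟩
  existsUnique_mem := by
    intro g
    refine ⟨orb (K : Set (Equiv.Perm G)) g, ⟨⟨g, rfl⟩, self_mem_orb g⟩, ?_⟩
    rintro X ⟨⟨g', rfl⟩, hgX⟩
    exact (orb_eq_of_mem hgX).symm
  zero_mem := ⟨0, orb_zero.symm⟩
  neg_mem := by
    rintro X ⟨g, rfl⟩
    exact ⟨-g, (orb_neg hK g).symm⟩
  count_const := by
    rintro X ⟨x0, rfl⟩ Y ⟨y0, rfl⟩ Z ⟨z0, rfl⟩ z hz z' hz'
    exact count_const_orb hK hz hz'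

/-- The orbit of the pair `(a, b)` under `K`. -/
def genOrb (K : Set (Equiv.Perm G)) (a b : G) : Set (G × G) :=
  {p | ∃ k ∈ K, k a = p.1 ∧ k b = p.2}

lemma arcs_orb (hK : rSet G ⊆ (K : Set (Equiv.Perm G))) (g : G) :
    arcs (orb (K : Set (Equiv.Perm G)) g) = genOrb (K : Set (Equiv.Perm G)) 0 g := by
  ext p
  rw [mem_arcs]
  constructor
  · rintro ⟨k, hk, hk0, hkg⟩
    refine ⟨addRightPerm p.1 * k, K.mul_mem (addRightPerm_mem hK _) hk, ?_, ?_⟩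
    · simp [Equiv.Perm.mul_apply, addRightPerm, hk0]
    · simp [Equiv.Perm.mul_apply, addRightPerm, hkg, sub_add_cancel]
  · rintro ⟨k, hk, hk1, hk2⟩
    refine ⟨addRightPerm (-p.1) * k, K.mul_mem (addRightPerm_mem hK _) hk, ?_, ?_⟩
    · simp [Equiv.Perm.mul_apply, addRightPerm, hk1]
    · simp [Equiv.Perm.mul_apply, addRightPerm, hk2, sub_eq_add_neg]

lemma genOrb_shift (hK : rSet G ⊆ (K : Set (Equiv.Perm G))) (a b : G) :
    genOrb (K : Set (Equiv.Perm G)) a b = genOrb (K : Set (Equiv.Perm G)) 0 (b - a) := by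
  ext p
  constructor
  · rintro ⟨k, hk, hk1, hk2⟩
    refine ⟨k * addRightPerm a, K.mul_mem hk (addRightPerm_mem hK _), ?_, ?_⟩
    · simp [Equiv.Perm.mul_apply, addRightPerm, hk1]
    · simp [Equiv.Perm.mul_apply, addRightPerm, sub_add_cancel, hk2]
  · rintro ⟨k, hk, hk1, hk2⟩
    refine ⟨k * addRightPerm (-a), K.mul_mem hk (addRightPerm_mem hK _), ?_, ?_⟩
    · simp [Equiv.Perm.mul_apply, addRightPerm, hk1]
    · rw [Equiv.Perm.mul_apply]
      simpa [addRightPerm, ← sub_eq_add_neg] using hk2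

lemma pmap_genOrb (g : Equiv.Perm G) (K : Subgroup (Equiv.Perm G)) (a b : G) :
    pmap g (genOrb (K : Set (Equiv.Perm G)) a b) =
      genOrb ((K.map (MulAut.conj g).toMonoidHom : Subgroup (Equiv.Perm G)) :
        Set (Equiv.Perm G)) (g a) (g b) := by
  ext p
  constructor
  · rintro ⟨q, ⟨k, hk, h1, h2⟩, rfl⟩
    refine ⟨g * k * g⁻¹, Subgroup.mem_map.2 ⟨k, hk, rfl⟩, ?_, ?_⟩
    · simp [Equiv.Perm.mul_apply, h1]
    · simp [Equiv.Perm.mul_apply, h2]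
  · rintro ⟨m, hm, h1, h2⟩
    obtain ⟨k, hk, rfl⟩ := Subgroup.mem_map.1 hm
    refine ⟨(k a, k b), ⟨k, hk, rfl, rfl⟩, ?_⟩
    have e1 : ((MulAut.conj g).toMonoidHom k) (g a) = g (k a) := by
      simp [MulAut.conj_apply, Equiv.Perm.mul_apply]
    have e2 : ((MulAut.conj g).toMonoidHom k) (g b) = g (k b) := by
      simp [MulAut.conj_apply, Equiv.Perm.mul_apply]
    rw [e1] at h1
    rw [e2] at h2
    exact Prod.ext h1 h2

/-- `Aut(Cay(G,S))` as a subgroup. -/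
def cayGroup (S : Set G) : Subgroup (Equiv.Perm G) where
  carrier := autCaySet S
  one_mem' := pmap_one _
  mul_mem' := by
    intro a b ha hb
    show pmap (a * b) _ = _
    rw [← pmap_pmap, hb, ha]
  inv_mem' := by
    intro a ha
    exact pmap_inv_eq ha

lemma mem_cayGroup {S : Set G} {f : Equiv.Perm G} :
    f ∈ cayGroup S ↔ pmap f (arcs S) = arcs S := Iff.rfl

lemma rSet_subset_cayGroup (S : Set G) :
    rSet G ⊆ ((cayGroup S : Subgroup (Equiv.Perm G)) : Set (Equiv.Perm G)) := by
  rintro _ ⟨c, rfl⟩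
  exact pmap_addRight c S

lemma cayGroup_2closed [Finite G] (S : Set G) : Is2Closed (cayGroup S) := by
  intro f hf
  show pmap f (arcs S) = arcs S
  have hsub : pmap f (arcs S) ⊆ arcs S := by
    rintro _ ⟨q, hq, rfl⟩
    obtain ⟨k, hk, hk1, hk2⟩ := hf q.1 q.2
    show (f q.1, f q.2) ∈ arcs S
    rw [← hk1, ← hk2]
    have hk' : pmap k (arcs S) = arcs S := hk
    rw [← hk']
    exact ⟨q, hq, rfl⟩
  have hinj : Function.Injective (fun a : G × G => (f a.1, f a.2)) := by
    intro a b hab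
    exact Prod.ext (f.injective (congrArg Prod.fst hab)) (f.injective (congrArg Prod.snd hab))
  have hcard : (arcs S).ncard ≤ (pmap f (arcs S)).ncard := by
    unfold pmap
    rw [Set.ncard_image_of_injective _ hinj]
  exact Set.eq_of_subset_of_ncard_le hsub hcard (Set.toFinite _)

lemma inSup2_cayGroup [Finite G] (S : Set G) : InSup2 (cayGroup S) :=
  ⟨rSet_subset_cayGroup S, cayGroup_2closed S⟩

lemma conjSet_conjSet (δ γ : Equiv.Perm G) (N : Set (Equiv.Perm G)) :
    conjSet δ (conjSet γ N) = conjSet (γ * δ) N := by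
  unfold conjSet
  rw [← Set.image_comp]
  apply Set.image_congr
  intro s _
  simp [mul_assoc]

lemma conjSet_one (N : Set (Equiv.Perm G)) : conjSet (1 : Equiv.Perm G) N = N := by
  unfold conjSet
  simp

lemma gcomplete_refl (K : Subgroup (Equiv.Perm G)) : GComplete K K := by
  refine ⟨le_refl K, fun γ hγ => ⟨1, K.one_mem, ?_⟩⟩
  rw [conjSet_one]
  exact hγ

lemma gcomplete_trans {K1 K2 K3 : Subgroup (Equiv.Perm G)}
    (h12 : GComplete K1 K2) (h23 : GComplete K2 K3) : GComplete K1 K3 := by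
  refine ⟨le_trans h12.1 h23.1, fun γ hγ => ?_⟩
  obtain ⟨δ, hδ, hδ2⟩ := h23.2 γ hγ
  rw [conjSet_conjSet] at hδ2
  obtain ⟨δ', hδ', hδ'2⟩ := h12.2 (γ * δ) hδ2
  refine ⟨δ * δ', K3.mul_mem hδ (h23.1 hδ'), ?_⟩
  rw [conjSet_conjSet] at hδ'2 ⊢
  rw [← mul_assoc]
  exact hδ'2

lemma exists_sup2min [Finite G] (F : Subgroup (Equiv.Perm G)) (hF : InSup2 F) :
    ∃ K : Subgroup (Equiv.Perm G), InSup2Min K ∧ GComplete K F := by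
  have key : ∀ n : ℕ, ∀ F : Subgroup (Equiv.Perm G), InSup2 F →
      (F : Set (Equiv.Perm G)).ncard ≤ n →
      ∃ K, InSup2Min K ∧ GComplete K F := by
    intro n
    induction n with
    | zero =>
      intro F hF hcard
      have h1 : (1 : Equiv.Perm G) ∈ (F : Set (Equiv.Perm G)) := F.one_mem
      have hpos : 0 < (F : Set (Equiv.Perm G)).ncard :=
        (Set.ncard_pos (Set.toFinite _)).2 ⟨1, h1⟩
      omega
    | succ n ih =>
      intro F hF hcard
      by_cases hmin : ∀ K', InSup2 K' → GComplete K' F → K' = F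
      · exact ⟨F, ⟨hF, hmin⟩, gcomplete_refl F⟩
      · push_neg at hmin
        obtain ⟨K', hK', hKF, hne⟩ := hmin
        have hlt : (K' : Set (Equiv.Perm G)).ncard < (F : Set (Equiv.Perm G)).ncard := by
          apply Set.ncard_lt_ncard _ (Set.toFinite _)
          exact ⟨hKF.1, fun hsub => hne (le_antisymm hKF.1 hsub)⟩
        obtain ⟨K, hKmin, hKK'⟩ := ih K' hK' (by omega)
        exact ⟨K, hKmin, gcomplete_trans hKK' hKF⟩
  exact key (F : Set (Equiv.Perm G)).ncard F hF le_rfl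

lemma orb_subset {S : Set G} (hKF : K ≤ cayGroup S) {s : G} (hs : s ∈ S) :
    orb (K : Set (Equiv.Perm G)) s ⊆ S := by
  rintro _ ⟨k, hk, hk0, rfl⟩
  have hkS : pmap k (arcs S) = arcs S := hKF hk
  have h0s : ((0 : G), s) ∈ arcs S := mem_arcs.2 (by simpa using hs)
  have : (k 0, k s) ∈ arcs S := by
    rw [← hkS]
    exact ⟨(0, s), h0s, rfl⟩
  rw [hk0] at this
  simpa using mem_arcs.1 this

lemma pmap_autPerm_arcs {S : Set G} {γ : Equiv.Perm G}
    (hγ : γ ∈ autPerm (VBlocks (K : Set (Equiv.Perm G)))) (hKF : K ≤ cayGroup S) :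
    pmap γ (arcs S) = arcs S := by
  have hU : arcs S = ⋃ s ∈ S, arcs (orb (K : Set (Equiv.Perm G)) s) := by
    ext p
    simp only [Set.mem_iUnion]
    constructor
    · intro hp
      exact ⟨p.2 - p.1, mem_arcs.1 hp, mem_arcs.2 (self_mem_orb _)⟩
    · rintro ⟨s, hs, hp⟩
      exact mem_arcs.2 (orb_subset hKF hs (mem_arcs.1 hp))
  rw [hU]
  calc pmap γ (⋃ s ∈ S, arcs (orb (K : Set (Equiv.Perm G)) s))
      = ⋃ s ∈ S, pmap γ (arcs (orb (K : Set (Equiv.Perm G)) s)) := by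
        unfold pmap
        exact Set.image_iUnion₂ _ _
    _ = ⋃ s ∈ S, arcs (orb (K : Set (Equiv.Perm G)) s) := by
        apply Set.iUnion₂_congr
        intro s _
        exact hγ _ ⟨s, rfl⟩

lemma pmap_addEquiv (φ : G ≃+ G) (S : Set G) :
    pmap (φ.toEquiv : Equiv.Perm G) (arcs S) = arcs (⇑φ '' S) := by
  ext p
  constructor
  · rintro ⟨q, hq, rfl⟩
    show (φ q.1, φ q.2) ∈ arcs (⇑φ '' S)
    rw [mem_arcs]
    exact ⟨q.2 - q.1, mem_arcs.1 hq, map_sub φ _ _⟩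
  · intro hp
    obtain ⟨s, hs, hφs⟩ := mem_arcs.1 hp
    refine ⟨(φ.symm p.1, φ.symm p.2), ?_, ?_⟩
    · rw [mem_arcs]
      have : φ.symm p.2 - φ.symm p.1 = φ.symm (p.2 - p.1) := (map_sub φ.symm _ _).symm
      rw [this, ← hφs]
      simpa using hs
    · show (φ (φ.symm p.1), φ (φ.symm p.2)) = p
      simp

lemma pmap_arcs_orb_conj (g : Equiv.Perm G) (hrK : rSet G ⊆ (K : Set (Equiv.Perm G)))
    {K2 : Subgroup (Equiv.Perm G)} (hK2 : K2 = K.map (MulAut.conj g).toMonoidHom)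
    (hrK2 : rSet G ⊆ (K2 : Set (Equiv.Perm G))) (x : G) :
    pmap g (arcs (orb (K : Set (Equiv.Perm G)) x)) =
      arcs (orb (K2 : Set (Equiv.Perm G)) (g x - g 0)) := by
  subst hK2
  rw [arcs_orb hrK, pmap_genOrb, genOrb_shift hrK2, arcs_orb hrK2]

lemma arcs_orb_conj_pmap (g : Equiv.Perm G) (hrK : rSet G ⊆ (K : Set (Equiv.Perm G)))
    {K2 : Subgroup (Equiv.Perm G)} (hK2 : K2 = K.map (MulAut.conj g).toMonoidHom)
    (hrK2 : rSet G ⊆ (K2 : Set (Equiv.Perm G))) (y : G) :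
    arcs (orb (K2 : Set (Equiv.Perm G)) y) =
      pmap g (arcs (orb (K : Set (Equiv.Perm G)) (g⁻¹ y - g⁻¹ 0))) := by
  subst hK2
  rw [arcs_orb hrK2, arcs_orb hrK, ← genOrb_shift hrK, pmap_genOrb]
  simp [Equiv.Perm.inv_def]

end AuxStatement2

/-- If `V(K,G)` is a CI-S-ring for every `K ∈ Sup_2^min(G_r)`, then
`G` is a DCI-group. -/
theorem statement2 (G : Type*) [AddGroup G] [Finite G]
    (h : ∀ K : Subgroup (Equiv.Perm G), InSup2Min K →
      ∀ A : SRing G, A.blocks = VBlocks (K : Set (Equiv.Perm G)) → IsCIBlocks A.blocks) :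
    IsDCI G := by
  intro S T hT
  obtain ⟨f, hf⟩ := hT
  obtain ⟨K, hKmin, hKF⟩ := exists_sup2min (cayGroup S) (inSup2_cayGroup S)
  have hrK : rSet G ⊆ (K : Set (Equiv.Perm G)) := hKmin.1.1
  have hconjf : conjSet f (rSet G) ⊆ ((cayGroup S : Subgroup (Equiv.Perm G)) :
      Set (Equiv.Perm G)) := by
    rintro _ ⟨t, ⟨c, rfl⟩, rfl⟩
    show pmap (f⁻¹ * addRightPerm c * f) (arcs S) = arcs S
    rw [mul_assoc, ← pmap_pmap, ← pmap_pmap, hf, pmap_addRight]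
    exact pmap_inv_eq hf
  obtain ⟨δ, hδF, hδ⟩ := hKF.2 f hconjf
  have hδS : pmap δ (arcs S) = arcs S := hδF
  have hg1 : conjSet (f * δ) (rSet G) ⊆ (K : Set (Equiv.Perm G)) := by
    rw [← conjSet_conjSet]
    exact hδ
  have hgS : pmap (f * δ) (arcs S) = arcs T := by
    rw [← pmap_pmap, hδS, hf]
  have hrK2 : rSet G ⊆ ((K.map (MulAut.conj (f * δ)).toMonoidHom :
      Subgroup (Equiv.Perm G)) : Set (Equiv.Perm G)) := by
    intro t ht
    have hmem : (f * δ)⁻¹ * t * (f * δ) ∈ (K : Set (Equiv.Perm G)) := hg1 ⟨t, ht, rfl⟩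
    refine Subgroup.mem_map.2 ⟨(f * δ)⁻¹ * t * (f * δ), hmem, ?_⟩
    show (f * δ) * ((f * δ)⁻¹ * t * (f * δ)) * (f * δ)⁻¹ = t
    group
  have hCI : IsCIBlocks (VBlocks (K : Set (Equiv.Perm G))) := h K hKmin (sringOf K hrK) rfl
  have hgiso : (f * δ) ∈ isoPerm (VBlocks (K : Set (Equiv.Perm G))) := by
    refine ⟨sringOf (K.map (MulAut.conj (f * δ)).toMonoidHom) hrK2, ?_⟩
    ext R
    constructor
    · rintro ⟨X, ⟨x, rfl⟩, rfl⟩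
      exact ⟨orb ((K.map (MulAut.conj (f * δ)).toMonoidHom : Subgroup (Equiv.Perm G)) :
          Set (Equiv.Perm G)) ((f * δ) x - (f * δ) 0), ⟨_, rfl⟩,
        pmap_arcs_orb_conj (f * δ) hrK rfl hrK2 x⟩
    · rintro ⟨Y, ⟨y, rfl⟩, rfl⟩
      exact ⟨orb (K : Set (Equiv.Perm G)) ((f * δ)⁻¹ y - (f * δ)⁻¹ 0), ⟨_, rfl⟩,
        arcs_orb_conj_pmap (f * δ) hrK rfl hrK2 y⟩
  rw [hCI] at hgiso
  obtain ⟨γ, hγ, φ, hφ⟩ := hgiso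
  refine ⟨φ, ?_⟩
  have hγS : pmap γ (arcs S) = arcs S := pmap_autPerm_arcs hγ hKF.1
  have hgdecomp : (f * δ) = (φ.toEquiv : Equiv.Perm G) * γ := Equiv.ext hφ
  have harcs : arcs T = arcs (⇑φ '' S) := by
    rw [← hgS, hgdecomp, ← pmap_pmap, hγS, pmap_addEquiv]
  exact (arcs_inj harcs).symm
end

section
/- Let G be an elementary abelian p-group, let A be an S-ring over G, and let S = U/L be an A-section of G. Suppose that A is the nontrivial S-wreath product, that A_U = cyc(K1, U) for some K1 ≤ Aut(U), and that A_{G/L} = cyc(K2, G/L) for some K2 ≤ Aut(G/L). If K1^S = K2^S, then A is cyclotomic. -/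
open Pointwise

section StatementSixHelpers

variable {H : Type*} [AddCommGroup H]

/-- The orbit of `g` under a subgroup of `AddAut H`. -/
def orbK (K : AddSubgroup (AddAut H)) (g : H) : Set H := {h | ∃ φ ∈ K, φ g = h}

lemma mem_orbK_self (K : AddSubgroup (AddAut H)) (g : H) : g ∈ orbK K g :=
  ⟨0, zero_mem _, rfl⟩

lemma orbK_eq_of_mem {K : AddSubgroup (AddAut H)} {g h : H} (hh : h ∈ orbK K g) :
    orbK K h = orbK K g := by
  obtain ⟨α, hα, rfl⟩ := hh
  ext y
  constructor
  · rintro ⟨β, hβ, rfl⟩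
    exact ⟨β + α, add_mem hβ hα, rfl⟩
  · rintro ⟨β, hβ, rfl⟩
    refine ⟨β + -α, add_mem hβ (neg_mem hα), ?_⟩
    show β ((-α) (α g)) = β g
    rw [AddAut.neg_apply_self]

lemma autOrbits_eq_orbK {K : AddSubgroup (AddAut H)} {O : Set H} (hO : O ∈ autOrbits K)
    {g : H} (hg : g ∈ O) : O = orbK K g := by
  obtain ⟨g0, rfl⟩ := hO
  exact (orbK_eq_of_mem (hg : g ∈ orbK K g0)).symm

lemma SRing.block_eq {G : Type*} [AddGroup G] (A : SRing G) {X Y : Set G} {x : G}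
    (hX : X ∈ A.blocks) (hY : Y ∈ A.blocks) (hx : x ∈ X) (hy : x ∈ Y) : X = Y := by
  obtain ⟨Z, _, hun⟩ := A.existsUnique_mem x
  rw [hun X ⟨hX, hx⟩, hun Y ⟨hY, hy⟩]

lemma SRing.block_subset_aset {G : Type*} [AddGroup G] (A : SRing G) {C : Set (Set G)}
    (hC : C ⊆ A.blocks) {X : Set G} (hX : X ∈ A.blocks) {x : G} (hx : x ∈ X)
    (hxC : x ∈ ⋃₀ C) : X ⊆ ⋃₀ C := by
  obtain ⟨Y, hY, hxY⟩ := hxC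
  have := A.block_eq hX (hC hY) hx hxY
  subst this
  exact fun z hz => ⟨X, hY, hz⟩

end StatementSixHelpers

/-- Let `G` be an elementary abelian `p`-group, `A` an S-ring over
`G`, `S = U/L` an `A`-section with `A` the nontrivial `S`-wreath product,
`A_U = cyc(K1,U)` and `A_{G/L} = cyc(K2,G/L)`. If `K1^S = K2^S` then `A` is
cyclotomic. -/
theorem statement6 (p : ℕ) (hp : p.Prime) (G : Type*) [AddCommGroup G] [Finite G]
    (hGp : ∀ g : G, p • g = 0)
    (A : SRing G) (U L : AddSubgroup G)
    (hwr : IsNontrivialWreath A.blocks U L)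
    (K1 : AddSubgroup (AddAut U)) (hK1 : subBlocks A.blocks U = autOrbits K1)
    (K2 : AddSubgroup (AddAut (G ⧸ L))) (hK2 : quotBlocks A.blocks L = autOrbits K2)
    (hS : secAutOfSub U L (K1 : Set (AddAut U)) =
      secAutOfQuot U L (K2 : Set (AddAut (G ⧸ L)))) :
    IsCyclotomic A.blocks := by
  classical
  obtain ⟨⟨hUset, hLset, hLU, _hnorm, hrad⟩, hLne, hUne⟩ := hwr
  haveI : Fact p.Prime := ⟨hp⟩
  haveI : NeZero p := ⟨hp.ne_zero⟩
  haveI : Module (ZMod p) G := AddCommGroup.zmodModule hGp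
  haveI : Module (ZMod p) (G ⧸ L) := QuotientAddGroup.zmodModule
    (fun x => by rw [hGp x]; exact zero_mem _)
  -- the predicate defining the cyclotomic group M
  set P : AddAut G → Prop := fun φ =>
    (∃ φ1 ∈ K1, ∀ u : U, φ ↑u = ↑(φ1 u)) ∧
    (∃ φ2 ∈ K2, ∀ g : G, (QuotientAddGroup.mk (φ g) : G ⧸ L) = φ2 (QuotientAddGroup.mk g))
    with hP
  have hPone : P 0 := ⟨⟨0, zero_mem _, fun u => by rw [AddAut.zero_apply, AddAut.zero_apply]⟩,
    ⟨0, zero_mem _, fun g => by rw [AddAut.zero_apply, AddAut.zero_apply]⟩⟩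
  have hPmul : ∀ {a b : AddAut G}, P a → P b → P (a + b) := by
    rintro a b ⟨⟨a1, ha1, ha1p⟩, ⟨a2, ha2, ha2p⟩⟩ ⟨⟨b1, hb1, hb1p⟩, ⟨b2, hb2, hb2p⟩⟩
    constructor
    · exact ⟨a1 + b1, add_mem ha1 hb1, fun u => by
        rw [AddAut.add_apply, AddAut.add_apply, hb1p, ha1p]⟩
    · exact ⟨a2 + b2, add_mem ha2 hb2, fun g => by
        rw [AddAut.add_apply, AddAut.add_apply, ha2p, hb2p]⟩
  have hPinv : ∀ {a : AddAut G}, P a → P (-a) := by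
    rintro a ⟨⟨a1, ha1, ha1p⟩, ⟨a2, ha2, ha2p⟩⟩
    constructor
    · refine ⟨-a1, neg_mem ha1, fun u => ?_⟩
      apply a.injective
      rw [AddAut.apply_neg_self, ha1p, AddAut.apply_neg_self]
    · refine ⟨-a2, neg_mem ha2, fun g => ?_⟩
      apply a2.injective
      rw [← ha2p, AddAut.apply_neg_self, AddAut.apply_neg_self]
  refine ⟨⟨⟨⟨setOf P, fun ha hb => hPmul ha hb⟩, hPone⟩, fun ha => hPinv ha⟩, ?_⟩
  set M : AddSubgroup (AddAut G) := ⟨⟨⟨setOf P, fun ha hb => hPmul ha hb⟩, hPone⟩, fun ha => hPinv ha⟩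
    with hM
  have hmemM : ∀ φ : AddAut G, φ ∈ M ↔ P φ := fun φ => Iff.rfl
  -- L is closed under K1
  have hLK1 : ∀ φ1 ∈ K1, ∀ u : U, (↑u : G) ∈ L → (↑(φ1 u) : G) ∈ L := by
    intro φ1 hφ1 u hu
    obtain ⟨C, hC, hCL⟩ := hLset
    have hxC : (↑u : G) ∈ ⋃₀ C := by rw [← hCL]; exact hu
    obtain ⟨X, hXC, hxX⟩ := hxC
    have hXb : X ∈ A.blocks := hC hXC
    have hXL : X ⊆ (L : Set G) := by rw [hCL]; exact fun z hz => ⟨X, hXC, hz⟩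
    have hXU : X ⊆ (U : Set G) := fun z hz => hLU (hXL hz)
    have hZ : (Subtype.val ⁻¹' X : Set U) ∈ subBlocks A.blocks U := ⟨X, hXb, hXU, rfl⟩
    rw [hK1] at hZ
    have horb := autOrbits_eq_orbK hZ (show u ∈ _ from hxX)
    have hmem : φ1 u ∈ (Subtype.val ⁻¹' X : Set U) := by
      rw [horb]; exact ⟨φ1, hφ1, rfl⟩
    exact hXL hmem
  -- the image of U in G/L is closed under K2
  have hUK2 : ∀ φ2 ∈ K2, ∀ u : U, ∃ v : U,
      φ2 (QuotientAddGroup.mk (↑u : G)) = QuotientAddGroup.mk (↑v : G) := by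
    intro φ2 hφ2 u
    obtain ⟨C, hC, hCU⟩ := hUset
    have hxC : (↑u : G) ∈ ⋃₀ C := by rw [← hCU]; exact u.2
    obtain ⟨X, hXC, hxX⟩ := hxC
    have hXb : X ∈ A.blocks := hC hXC
    have hQ : ((QuotientAddGroup.mk : G → G ⧸ L) '' X) ∈ quotBlocks A.blocks L := ⟨X, hXb, rfl⟩
    rw [hK2] at hQ
    have horb := autOrbits_eq_orbK hQ ⟨↑u, hxX, rfl⟩
    have hmem : φ2 (QuotientAddGroup.mk ↑u) ∈ (QuotientAddGroup.mk : G → G ⧸ L) '' X := by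
      rw [horb]; exact ⟨φ2, hφ2, rfl⟩
    obtain ⟨y, hyX, hy⟩ := hmem
    have hyU : y ∈ U := by
      have : y ∈ ⋃₀ C := ⟨X, hXC, hyX⟩
      rw [← hCU] at this; exact this
    exact ⟨⟨y, hyU⟩, hy.symm⟩
  -- K1 leaves L' invariant
  have hmapL' : ∀ φ1 ∈ K1,
      (L.addSubgroupOf U).map ((φ1 : U ≃+ U) : U →+ U) = L.addSubgroupOf U := by
    intro φ1 hφ1
    ext v
    simp only [AddSubgroup.mem_map, AddSubgroup.mem_addSubgroupOf]
    constructor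
    · rintro ⟨w, hw, rfl⟩
      exact hLK1 φ1 hφ1 w hw
    · intro hv
      refine ⟨(-φ1) v, hLK1 (-φ1) (neg_mem hφ1) v hv, ?_⟩
      show φ1 ((-φ1) v) = v
      rw [AddAut.apply_neg_self]
  -- matching: any φ1 ∈ K1 matches some φ2 ∈ K2 on the section
  have hmatch1 : ∀ φ1 ∈ K1, ∃ φ2 ∈ K2, ∀ u : U,
      (QuotientAddGroup.mk (↑(φ1 u) : G) : G ⧸ L) = φ2 (QuotientAddGroup.mk (↑u : G)) := by
    intro φ1 hφ1
    set ψ : AddAut (U ⧸ L.addSubgroupOf U) :=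
      QuotientAddGroup.congr (L.addSubgroupOf U) (L.addSubgroupOf U) (φ1 : U ≃+ U)
        (hmapL' φ1 hφ1) with hψ
    have hψmk : ∀ u : U, ψ (QuotientAddGroup.mk u) = QuotientAddGroup.mk (φ1 u) := fun u => rfl
    have hψmem : ψ ∈ secAutOfSub U L (K1 : Set (AddAut U)) := ⟨φ1, hφ1, hψmk⟩
    rw [hS] at hψmem
    obtain ⟨φ2, hφ2, hprop⟩ := hψmem
    refine ⟨φ2, hφ2, fun u => ?_⟩
    obtain ⟨v, hv⟩ := hUK2 φ2 hφ2 u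
    have h1 : ψ (QuotientAddGroup.mk u) = QuotientAddGroup.mk v := hprop u v hv
    rw [hψmk u] at h1
    have h2 : φ1 u - v ∈ L.addSubgroupOf U := (QuotientAddGroup.eq_iff_sub_mem).mp h1
    have h3 : (↑(φ1 u) : G) - ↑v ∈ L := (AddSubgroup.mem_addSubgroupOf).mp h2
    rw [hv]
    exact (QuotientAddGroup.eq_iff_sub_mem).mpr h3
  have hmatch2 : ∀ φ2 ∈ K2, ∃ φ1 ∈ K1, ∀ u : U,
      (QuotientAddGroup.mk (↑(φ1 u) : G) : G ⧸ L) = φ2 (QuotientAddGroup.mk (↑u : G)) := by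
    intro φ2 hφ2
    set e : (U ⧸ L.addSubgroupOf U) →+ G ⧸ L :=
      QuotientAddGroup.map (L.addSubgroupOf U) L U.subtype le_rfl with he
    have he_mk : ∀ u : U, e (QuotientAddGroup.mk u) = QuotientAddGroup.mk (↑u : G) :=
      fun u => rfl
    have heinj : Function.Injective e := by
      rw [injective_iff_map_eq_zero]
      intro a ha
      induction a using QuotientAddGroup.induction_on with
      | _ u =>
        rw [he_mk] at ha
        have : (↑u : G) ∈ L := (QuotientAddGroup.eq_zero_iff _).mp ha
        exact (QuotientAddGroup.eq_zero_iff _).mpr ((AddSubgroup.mem_addSubgroupOf).mpr this)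
    set Umap : AddSubgroup (G ⧸ L) := U.map (QuotientAddGroup.mk' L) with hUmapdef
    have hememUmap : ∀ a : U ⧸ L.addSubgroupOf U, e a ∈ Umap := fun a =>
      QuotientAddGroup.induction_on a (fun u => ⟨↑u, u.2, rfl⟩)
    let g0 : (U ⧸ L.addSubgroupOf U) →+ Umap :=
      { toFun := fun a => ⟨e a, hememUmap a⟩
        map_zero' := Subtype.ext (by simp)
        map_add' := fun a b => Subtype.ext (by simp) }
    have hg0bij : Function.Bijective g0 := by
      constructor
      · intro a b hab
        exact heinj (congrArg Subtype.val hab)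
      · rintro ⟨y, x, hxU, hx⟩
        exact ⟨QuotientAddGroup.mk ⟨x, hxU⟩, Subtype.ext ((he_mk ⟨x, hxU⟩).trans hx)⟩
    set ι : (U ⧸ L.addSubgroupOf U) ≃+ Umap := AddEquiv.ofBijective g0 hg0bij with hι
    have hι_coe : ∀ a, (↑(ι a) : G ⧸ L) = e a := fun a => rfl
    have hUmapmem : ∀ φ ∈ K2, ∀ y : G ⧸ L, y ∈ Umap → φ y ∈ Umap := by
      intro φ hφ y hy
      obtain ⟨x, hxU, hx⟩ := hy
      obtain ⟨v, hv⟩ := hUK2 φ hφ ⟨x, hxU⟩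
      rw [← hx]
      exact ⟨↑v, v.2, hv.symm⟩
    set ρ : Umap ≃+ Umap :=
      { toFun := fun y => ⟨φ2 ↑y, hUmapmem φ2 hφ2 ↑y y.2⟩
        invFun := fun y => ⟨(-φ2) ↑y, hUmapmem (-φ2) (neg_mem hφ2) ↑y y.2⟩
        left_inv := fun y => Subtype.ext (by show (-φ2) (φ2 ↑y) = ↑y; rw [AddAut.neg_apply_self])
        right_inv := fun y => Subtype.ext (by show φ2 ((-φ2) ↑y) = ↑y; rw [AddAut.apply_neg_self])
        map_add' := fun a b => Subtype.ext (by push_cast; exact map_add φ2 _ _) } with hρ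
    set ψ : AddAut (U ⧸ L.addSubgroupOf U) := ι.trans (ρ.trans ι.symm) with hψdef
    have hψprop : ∀ u v : U,
        φ2 (QuotientAddGroup.mk (↑u : G)) = QuotientAddGroup.mk (↑v : G) →
        ψ (QuotientAddGroup.mk u) = QuotientAddGroup.mk v := by
      intro u v huv
      show ι.symm (ρ (ι (QuotientAddGroup.mk u))) = QuotientAddGroup.mk v
      have h1 : ρ (ι (QuotientAddGroup.mk u)) = ι (QuotientAddGroup.mk v) := by
        apply Subtype.ext
        show φ2 ↑(ι (QuotientAddGroup.mk u)) = ↑(ι (QuotientAddGroup.mk v))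
        rw [hι_coe, hι_coe, he_mk, he_mk]
        exact huv
      rw [h1, AddEquiv.symm_apply_apply]
    have hψmem : ψ ∈ secAutOfQuot U L (K2 : Set (AddAut (G ⧸ L))) := ⟨φ2, hφ2, hψprop⟩
    rw [← hS] at hψmem
    obtain ⟨φ1, hφ1, hprop1⟩ := hψmem
    refine ⟨φ1, hφ1, fun u => ?_⟩
    obtain ⟨v, hv⟩ := hUK2 φ2 hφ2 u
    have h1 : ψ (QuotientAddGroup.mk u) = QuotientAddGroup.mk v := hψprop u v hv
    rw [hprop1 u] at h1
    have h2 : (↑(φ1 u) : G) - ↑v ∈ L :=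
      (AddSubgroup.mem_addSubgroupOf).mp ((QuotientAddGroup.eq_iff_sub_mem).mp h1)
    rw [hv]
    exact (QuotientAddGroup.eq_iff_sub_mem).mpr h2
  -- extension of a matching pair to an automorphism of G
  have hext : ∀ φ1 ∈ K1, ∀ φ2 ∈ K2,
      (∀ u : U, (QuotientAddGroup.mk (↑(φ1 u) : G) : G ⧸ L) = φ2 (QuotientAddGroup.mk (↑u : G))) →
      ∃ φ : AddAut G, (∀ u : U, φ ↑u = ↑(φ1 u)) ∧
        (∀ g : G, (QuotientAddGroup.mk (φ g) : G ⧸ L) = φ2 (QuotientAddGroup.mk g)) := by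
    intro φ1 hφ1 φ2 hφ2 hcomp
    set Usm : Submodule (ZMod p) G := AddSubgroup.toZModSubmodule p U with hUsmdef
    obtain ⟨W, hW⟩ := Submodule.exists_isCompl Usm
    set prU := Submodule.linearProjOfIsCompl Usm W hW with hprUdef
    set πl : G →ₗ[ZMod p] G ⧸ L := (QuotientAddGroup.mk' L).toZModLinearMap p with hπl
    have hπlsurj : LinearMap.range πl = ⊤ := by
      rw [Submodule.eq_top_iff']
      intro y
      obtain ⟨x, hx⟩ := QuotientAddGroup.mk'_surjective L y
      exact ⟨x, hx⟩
    obtain ⟨sec, hsec⟩ := πl.exists_rightInverse_of_surjective hπlsurj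
    have hsec' : ∀ y, (QuotientAddGroup.mk (sec y) : G ⧸ L) = y := fun y =>
      LinearMap.ext_iff.mp hsec y
    have hUsmmem : ∀ x : Usm, (↑x : G) ∈ U := fun x => x.2
    have hmemUsm : ∀ x : G, x ∈ U → x ∈ Usm := fun x hx => hx
    set toU : G → U := fun g => ⟨↑(prU g), hUsmmem (prU g)⟩ with htoU
    have htoUadd : ∀ a b : G, toU (a + b) = toU a + toU b := fun a b =>
      Subtype.ext (by show (↑(prU (a + b)) : G) = ↑(prU a) + ↑(prU b); rw [map_add]; rfl)
    have hprUcoe : ∀ u : U, (↑(prU (↑u : G)) : G) = ↑u := by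
      intro u
      rw [show prU ↑u = prU ↑(⟨↑u, hmemUsm ↑u u.2⟩ : Usm) from rfl]
      exact congrArg Subtype.val (Submodule.projectionOnto_apply_left hW _)
    have htoUu : ∀ u : U, toU ↑u = u := fun u => Subtype.ext (hprUcoe u)
    set θf : G → G := fun g =>
      ↑(φ1 (toU g)) + sec (φ2 (QuotientAddGroup.mk (g - ↑(toU g)))) with hθf
    have expand : ∀ g : G, θf g =
        ↑(φ1 (toU g)) + sec (φ2 (QuotientAddGroup.mk (g - ↑(toU g)))) := fun g => rfl
    have hmkzero : (QuotientAddGroup.mk (0 : G) : G ⧸ L) = 0 := rfl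
    have hθadd : ∀ a b : G, θf (a + b) = θf a + θf b := by
      intro a b
      rw [expand (a + b), expand a, expand b, htoUadd a b, map_add φ1,
        AddSubgroup.coe_add, AddSubgroup.coe_add,
        show a + b - ((↑(toU a) : G) + ↑(toU b)) = (a - ↑(toU a)) + (b - ↑(toU b)) by abel,
        QuotientAddGroup.mk_add, map_add φ2, map_add sec]
      abel
    set θh : G →+ G := AddMonoidHom.mk' θf hθadd with hθh
    have hθU : ∀ u : U, θf ↑u = ↑(φ1 u) := by
      intro u
      rw [expand ↑u, htoUu u, sub_self, hmkzero, map_zero φ2, map_zero sec, add_zero]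
    have hθπ : ∀ g : G, (QuotientAddGroup.mk (θf g) : G ⧸ L) = φ2 (QuotientAddGroup.mk g) := by
      intro g
      rw [expand g, QuotientAddGroup.mk_add, hsec', hcomp (toU g), ← map_add φ2,
        ← QuotientAddGroup.mk_add]
      congr 2
      abel
    have hθinj : Function.Injective θf := by
      rw [show θf = ⇑θh from rfl, injective_iff_map_eq_zero]
      intro g hg
      have hg' : θf g = 0 := hg
      have h1 : φ2 (QuotientAddGroup.mk g) = 0 := by
        rw [← hθπ g, hg', hmkzero]
      have h2 : (QuotientAddGroup.mk g : G ⧸ L) = 0 := by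
        apply φ2.injective
        rw [h1, map_zero]
      have hgL : g ∈ L := (QuotientAddGroup.eq_zero_iff _).mp h2
      have hgU : g ∈ U := hLU hgL
      have h3 : toU g = ⟨g, hgU⟩ := by
        apply Subtype.ext
        show (↑(prU g) : G) = g
        rw [show prU g = prU ↑(⟨g, hmemUsm g hgU⟩ : Usm) from rfl]
        exact congrArg Subtype.val (Submodule.projectionOnto_apply_left hW _)
      have h4 : θf g = ↑(φ1 (⟨g, hgU⟩ : U)) := by
        rw [expand g, h3, sub_self, hmkzero, map_zero φ2, map_zero sec, add_zero]
      have h5 : φ1 (⟨g, hgU⟩ : U) = 0 := by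
        apply Subtype.ext
        show (↑(φ1 (⟨g, hgU⟩ : U)) : G) = 0
        rw [← h4]; exact hg'
      have h6 : (⟨g, hgU⟩ : U) = 0 := by
        apply φ1.injective
        rw [h5, map_zero]
      exact congrArg Subtype.val h6
    have hθbij : Function.Bijective θf := Finite.injective_iff_bijective.mp hθinj
    exact ⟨AddEquiv.ofBijective θh hθbij, hθU, hθπ⟩
  -- translations by elements of L fixing U pointwise
  have htrans : ∀ x : G, x ∉ U → ∀ l ∈ L, ∃ φ : AddAut G, P φ ∧ φ x = x + l := by
    intro x hxU l hlL
    set Usm : Submodule (ZMod p) G := AddSubgroup.toZModSubmodule p U with hUsmdef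
    have hxUsm : x ∉ Usm := hxU
    have hvne : Usm.mkQ x ≠ 0 := by
      intro h0
      exact hxUsm ((Submodule.Quotient.mk_eq_zero Usm).mp h0)
    obtain ⟨C, hC⟩ := Submodule.exists_isCompl (Submodule.span (ZMod p) {Usm.mkQ x})
    set pr := Submodule.linearProjOfIsCompl _ C hC with hpr
    set coordx := LinearEquiv.coord (ZMod p) (G ⧸ Usm) (Usm.mkQ x) hvne with hcoord
    set flin : G →ₗ[ZMod p] ZMod p := coordx.toLinearMap.comp (pr.comp Usm.mkQ) with hflin
    have hfapp : ∀ g : G, flin g = coordx (pr (Usm.mkQ g)) := fun g => rfl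
    have hfU : ∀ g : G, g ∈ U → flin g = 0 := by
      intro g hg
      have h0 : Usm.mkQ g = 0 := (Submodule.Quotient.mk_eq_zero Usm).mpr hg
      rw [hfapp, h0, map_zero, map_zero]
    have hfx : flin x = 1 := by
      have h1 : pr (Usm.mkQ x) =
          ⟨Usm.mkQ x, Submodule.mem_span_singleton_self _⟩ :=
        Submodule.linearProjOfIsCompl_apply_left hC
          ⟨Usm.mkQ x, Submodule.mem_span_singleton_self _⟩
      rw [hfapp, h1, hcoord]
      exact LinearEquiv.coord_self (ZMod p) _ _ hvne
    have hfl : flin l = 0 := hfU l (hLU hlL)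
    set ψf : G → G := fun g => g + flin g • l with hψf
    set ψb : G → G := fun g => g - flin g • l with hψb
    have hfψf : ∀ g, flin (ψf g) = flin g := by
      intro g
      rw [hψf]
      show flin (g + flin g • l) = flin g
      rw [map_add, map_smul, hfl, smul_zero, add_zero]
    have hfψb : ∀ g, flin (ψb g) = flin g := by
      intro g
      rw [hψb]
      show flin (g - flin g • l) = flin g
      rw [map_sub, map_smul, hfl, smul_zero, sub_zero]
    have hinv1 : ∀ g, ψb (ψf g) = g := by
      intro g
      show ψf g - flin (ψf g) • l = g
      rw [hfψf g]
      show g + flin g • l - flin g • l = g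
      abel
    have hinv2 : ∀ g, ψf (ψb g) = g := by
      intro g
      show ψb g + flin (ψb g) • l = g
      rw [hfψb g]
      show g - flin g • l + flin g • l = g
      abel
    set ψ : G ≃+ G :=
      { toFun := ψf
        invFun := ψb
        left_inv := hinv1
        right_inv := hinv2
        map_add' := fun a b => by
          show a + b + flin (a + b) • l = (a + flin a • l) + (b + flin b • l)
          rw [map_add, add_smul]
          abel } with hψ
    have hψapp : ∀ g : G, ψ g = g + flin g • l := fun g => rfl
    have hψU : ∀ u : U, ψ ↑u = ↑u := by
      intro u
      rw [hψapp, hfU ↑u u.2, zero_smul, add_zero]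
    have hψπ : ∀ g : G, (QuotientAddGroup.mk (ψ g) : G ⧸ L) = QuotientAddGroup.mk g := by
      intro g
      rw [hψapp, QuotientAddGroup.mk_add,
        (QuotientAddGroup.eq_zero_iff _).mpr (ZMod.smul_mem hlL (flin g)), add_zero]
    refine ⟨ψ, ⟨⟨0, zero_mem _, fun u => ?_⟩, ⟨0, zero_mem _, fun g => ?_⟩⟩, ?_⟩
    · rw [hψU u]; rfl
    · rw [hψπ g]; rfl
    · rw [hψapp, hfx, one_smul]
  -- the key lemma: each basic set is the M-orbit of any of its points
  have hkey : ∀ X ∈ A.blocks, ∀ x ∈ X, orbK M x = X := by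
    intro X hX x hx
    by_cases hxU : x ∈ U
    · obtain ⟨C, hC, hCU⟩ := hUset
      have hXU : X ⊆ (U : Set G) := by
        rw [hCU]
        exact A.block_subset_aset hC hX hx (by rw [← hCU]; exact hxU)
      have hZ : (Subtype.val ⁻¹' X : Set U) ∈ subBlocks A.blocks U := ⟨X, hX, hXU, rfl⟩
      rw [hK1] at hZ
      have horb : (Subtype.val ⁻¹' X : Set U) = orbK K1 ⟨x, hxU⟩ :=
        autOrbits_eq_orbK hZ (show (⟨x, hxU⟩ : U) ∈ _ from hx)
      ext y
      constructor
      · rintro ⟨φ, hφ, rfl⟩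
        obtain ⟨⟨φ1, hφ1, hp1⟩, -⟩ := (hmemM φ).mp hφ
        rw [hp1 ⟨x, hxU⟩]
        have hmem : φ1 ⟨x, hxU⟩ ∈ (Subtype.val ⁻¹' X : Set U) := by
          rw [horb]; exact ⟨φ1, hφ1, rfl⟩
        exact hmem
      · intro hy
        have hyU : y ∈ U := hXU hy
        have hmem : (⟨y, hyU⟩ : U) ∈ orbK K1 ⟨x, hxU⟩ := by
          rw [← horb]; exact hy
        obtain ⟨φ1, hφ1, hφ1x⟩ := hmem
        obtain ⟨φ2, hφ2, hcomp⟩ := hmatch1 φ1 hφ1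
        obtain ⟨φ, hφU, hφπ⟩ := hext φ1 hφ1 φ2 hφ2 hcomp
        refine ⟨φ, (hmemM φ).mpr ⟨⟨φ1, hφ1, hφU⟩, ⟨φ2, hφ2, hφπ⟩⟩, ?_⟩
        rw [hφU ⟨x, hxU⟩, hφ1x]
    · have hXnU : ¬X ⊆ (U : Set G) := fun h => hxU (h hx)
      have hLrad : ∀ l ∈ L, ∀ z ∈ X, l + z ∈ X := by
        intro l hl z hz
        have h1 := (hrad X hX hXnU hl).1
        rw [← h1]
        exact ⟨z, hz, rfl⟩
      have hQ : ((QuotientAddGroup.mk : G → G ⧸ L) '' X) ∈ quotBlocks A.blocks L :=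
        ⟨X, hX, rfl⟩
      rw [hK2] at hQ
      have horb : (QuotientAddGroup.mk : G → G ⧸ L) '' X
          = orbK K2 (QuotientAddGroup.mk x) := autOrbits_eq_orbK hQ ⟨x, hx, rfl⟩
      ext y
      constructor
      · rintro ⟨φ, hφ, rfl⟩
        obtain ⟨-, ⟨φ2, hφ2, hp2⟩⟩ := (hmemM φ).mp hφ
        have h1 : (QuotientAddGroup.mk (φ x) : G ⧸ L)
            ∈ (QuotientAddGroup.mk : G → G ⧸ L) '' X := by
          rw [horb, hp2 x]
          exact ⟨φ2, hφ2, rfl⟩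
        obtain ⟨z, hzX, hz⟩ := h1
        have hl : φ x - z ∈ L := (QuotientAddGroup.eq_iff_sub_mem).mp hz.symm
        have h2 := hLrad _ hl z hzX
        rwa [sub_add_cancel] at h2
      · intro hy
        have h1 : (QuotientAddGroup.mk y : G ⧸ L) ∈ orbK K2 (QuotientAddGroup.mk x) := by
          rw [← horb]
          exact ⟨y, hy, rfl⟩
        obtain ⟨φ2, hφ2, hφ2x⟩ := h1
        obtain ⟨φ1, hφ1, hcomp⟩ := hmatch2 φ2 hφ2
        obtain ⟨φ, hφU, hφπ⟩ := hext φ1 hφ1 φ2 hφ2 hcomp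
        have hφM : φ ∈ M := (hmemM φ).mpr ⟨⟨φ1, hφ1, hφU⟩, ⟨φ2, hφ2, hφπ⟩⟩
        have hφxU : φ x ∉ U := by
          intro hc
          obtain ⟨⟨φ1', hφ1', hp1'⟩, -⟩ := (hmemM (-φ)).mp (neg_mem hφM)
          have h2 : (-φ) (φ x) = ↑(φ1' ⟨φ x, hc⟩) := hp1' ⟨φ x, hc⟩
          rw [AddAut.neg_apply_self] at h2
          exact hxU (by rw [h2]; exact (φ1' ⟨φ x, hc⟩).2)
        have hl : y - φ x ∈ L := by
          apply (QuotientAddGroup.eq_iff_sub_mem).mp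
          rw [← hφ2x, ← hφπ x]
        obtain ⟨ψ, hψP, hψx⟩ := htrans (φ x) hφxU (y - φ x) hl
        refine ⟨ψ + φ, add_mem ((hmemM ψ).mpr hψP) hφM, ?_⟩
        rw [AddAut.add_apply, hψx]
        abel
  -- conclude
  ext O
  constructor
  · intro hO
    obtain ⟨x, hx⟩ := A.nonempty_mem O hO
    exact ⟨x, (hkey O hO x hx).symm⟩
  · rintro ⟨g, rfl⟩
    obtain ⟨X, ⟨hX, hgX⟩, _⟩ := A.existsUnique_mem g
    have h2 : {h | ∃ φ ∈ M, φ g = h} = X := hkey X hX g hgX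
    rw [h2]
    exact hX
end

section
/- Let A be an S-ring over a finite abelian group G = G1 × G2 such that G1 and G2 are A-subgroups. If A_{G1} = ℤG1 or A_{G2} = ℤG2 (i.e., all basic sets of A contained in G1, respectively in G2, are singletons), then A = A_{G1} ⊗ A_{G2}, that is, every basic set of A equals Y·Z for some basic sets Y ∈ S(A_{G1}) and Z ∈ S(A_{G2}). -/
open Pointwise

section Statement19Aux

variable {G : Type*} [AddCommGroup G]

lemma mem_singleton_add'' {a x : G} {s : Set G} :
    x ∈ ({a} : Set G) + s ↔ ∃ y ∈ s, x = a + y := by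
  simp only [Set.singleton_add, Set.mem_image]
  constructor
  · rintro ⟨y, hy, rfl⟩; exact ⟨y, hy, rfl⟩
  · rintro ⟨y, hy, rfl⟩; exact ⟨y, hy, rfl⟩

lemma count_singleton_one {g1 z : G} {X : Set G} (h : -g1 + z ∈ X) :
    {a : G × G | a.1 ∈ ({g1} : Set G) ∧ a.2 ∈ X ∧ a.1 + a.2 = z}.ncard = 1 := by
  have hs : {a : G × G | a.1 ∈ ({g1} : Set G) ∧ a.2 ∈ X ∧ a.1 + a.2 = z}
      = {(g1, -g1 + z)} := by
    ext ⟨a, b⟩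
    simp only [Set.mem_setOf_eq, Set.mem_singleton_iff, Prod.mk.injEq]
    constructor
    · rintro ⟨rfl, hb, hab⟩
      exact ⟨rfl, by rw [← hab]; abel⟩
    · rintro ⟨rfl, rfl⟩
      exact ⟨rfl, h, by abel⟩
  rw [hs, Set.ncard_singleton]

lemma count_singleton_zero {g1 z : G} {X : Set G} (h : -g1 + z ∉ X) :
    {a : G × G | a.1 ∈ ({g1} : Set G) ∧ a.2 ∈ X ∧ a.1 + a.2 = z}.ncard = 0 := by
  have hs : {a : G × G | a.1 ∈ ({g1} : Set G) ∧ a.2 ∈ X ∧ a.1 + a.2 = z}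
      = (∅ : Set (G × G)) := by
    ext ⟨a, b⟩
    simp only [Set.mem_setOf_eq, Set.mem_singleton_iff, Set.mem_empty_iff_false, iff_false]
    rintro ⟨ha, hb, hab⟩
    apply h
    have hb' : b = -g1 + z := by rw [← hab, ha]; abel
    rwa [← hb']
  rw [hs, Set.ncard_empty]

variable (A : SRing G)

lemma block_subset_of_mem {T X : Set G} (hT : IsASet A.blocks T) (hX : X ∈ A.blocks)
    {x : G} (hx : x ∈ X) (hxT : x ∈ T) : X ⊆ T := by
  obtain ⟨C, hC, rfl⟩ := hT
  obtain ⟨Z, hZ, hxZ⟩ := hxT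
  have hXZ : X = Z := (A.existsUnique_mem x).unique ⟨hX, hx⟩ ⟨hC hZ, hxZ⟩
  exact hXZ ▸ Set.subset_sUnion_of_mem hZ

lemma isASet_of_blocks {X : Set G} (h : ∀ x ∈ X, ∃ Z ∈ A.blocks, x ∈ Z ∧ Z ⊆ X) :
    IsASet A.blocks X := by
  refine ⟨{Z | Z ∈ A.blocks ∧ Z ⊆ X}, fun Z hZ => hZ.1, ?_⟩
  apply Set.Subset.antisymm
  · intro x hx
    obtain ⟨Z, hZ, hxZ, hZX⟩ := h x hx
    exact ⟨Z, ⟨hZ, hZX⟩, hxZ⟩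
  · intro x hx
    obtain ⟨Z, ⟨_, hZX⟩, hxZ⟩ := hx
    exact hZX hxZ

lemma block_isASet {X : Set G} (hX : X ∈ A.blocks) : IsASet A.blocks X :=
  ⟨{X}, by simpa, by simp⟩

lemma translate_block {g1 : G} (hg : ({g1} : Set G) ∈ A.blocks)
    {X : Set G} (hX : X ∈ A.blocks) : IsASet A.blocks (({g1} : Set G) + X) := by
  apply isASet_of_blocks
  intro z hz
  obtain ⟨Z, ⟨hZ, hzZ⟩, _⟩ := A.existsUnique_mem z
  refine ⟨Z, hZ, hzZ, ?_⟩
  intro z' hz'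
  have hcc := A.count_const _ hg X hX Z hZ z hzZ z' hz'
  obtain ⟨y, hy, rfl⟩ := mem_singleton_add''.mp hz
  have hyz : -g1 + (g1 + y) ∈ X := by rwa [show -g1 + (g1 + y) = y by abel]
  rw [count_singleton_one hyz] at hcc
  by_cases h' : -g1 + z' ∈ X
  · exact mem_singleton_add''.mpr ⟨-g1 + z', h', by abel⟩
  · rw [count_singleton_zero h'] at hcc
    exact absurd hcc one_ne_zero

lemma translate_ASet {g1 : G} (hg : ({g1} : Set G) ∈ A.blocks)
    {T : Set G} (hT : IsASet A.blocks T) : IsASet A.blocks (({g1} : Set G) + T) := by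
  apply isASet_of_blocks
  intro z hz
  obtain ⟨t, ht, rfl⟩ := mem_singleton_add''.mp hz
  obtain ⟨Zt, ⟨hZt, htZt⟩, _⟩ := A.existsUnique_mem t
  have hZtT : Zt ⊆ T := block_subset_of_mem A hT hZt htZt ht
  obtain ⟨C, hC, hU⟩ := translate_block A hg hZt
  have hgz : g1 + t ∈ ({g1} : Set G) + Zt := mem_singleton_add''.mpr ⟨t, htZt, rfl⟩
  rw [hU] at hgz
  obtain ⟨Z, hZ, hgzZ⟩ := hgz
  refine ⟨Z, hC hZ, hgzZ, ?_⟩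
  calc Z ⊆ ⋃₀ C := Set.subset_sUnion_of_mem hZ
    _ = ({g1} : Set G) + Zt := hU.symm
    _ ⊆ ({g1} : Set G) + T := Set.add_subset_add_left hZtT

lemma singleton_block {H1 : AddSubgroup G} (h1 : IsASubgroup A.blocks H1)
    (hsing : ∀ X ∈ A.blocks, X ⊆ (H1 : Set G) → ∃ x : G, X = {x})
    {g : G} (hg : g ∈ H1) : ({g} : Set G) ∈ A.blocks := by
  obtain ⟨B, ⟨hB, hgB⟩, _⟩ := A.existsUnique_mem g
  have hBH : B ⊆ (H1 : Set G) := block_subset_of_mem A h1 hB hgB hg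
  obtain ⟨x, rfl⟩ := hsing B hB hBH
  rw [Set.mem_singleton_iff.mp hgB]
  exact hB

lemma key_statement19 (H1 H2 : AddSubgroup G) (hsup : H1 ⊔ H2 = ⊤)
    (h1 : IsASubgroup A.blocks H1) (h2 : IsASubgroup A.blocks H2)
    (hsing : ∀ X ∈ A.blocks, X ⊆ (H1 : Set G) → ∃ x : G, X = {x}) :
    ∀ X ∈ A.blocks, ∃ g1 ∈ H1, ({g1} : Set G) ∈ A.blocks ∧
      ∃ Z ∈ A.blocks, Z ⊆ (H2 : Set G) ∧ X = ({g1} : Set G) + Z := by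
  intro X hX
  obtain ⟨x, hx⟩ := A.nonempty_mem X hX
  have hxsup : x ∈ H1 ⊔ H2 := hsup ▸ AddSubgroup.mem_top x
  rw [AddSubgroup.mem_sup] at hxsup
  obtain ⟨g1, hg1, g2, hg2, hg12⟩ := hxsup
  have hbg1 : ({g1} : Set G) ∈ A.blocks := singleton_block A h1 hsing hg1
  have hbng1 : ({-g1} : Set G) ∈ A.blocks := singleton_block A h1 hsing (neg_mem hg1)
  have hAcoset : IsASet A.blocks (({g1} : Set G) + (H2 : Set G)) := translate_ASet A hbg1 h2
  have hxco : x ∈ ({g1} : Set G) + (H2 : Set G) :=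
    mem_singleton_add''.mpr ⟨g2, hg2, hg12.symm⟩
  have hXco : X ⊆ ({g1} : Set G) + (H2 : Set G) := block_subset_of_mem A hAcoset hX hx hxco
  set Zs : Set G := ({-g1} : Set G) + X with hZs
  have hZA : IsASet A.blocks Zs := translate_ASet A hbng1 (block_isASet A hX)
  have hg2Z : g2 ∈ Zs := mem_singleton_add''.mpr ⟨x, hx, by rw [← hg12]; abel⟩
  have hZH2 : Zs ⊆ (H2 : Set G) := by
    intro z hz
    obtain ⟨x', hx', rfl⟩ := mem_singleton_add''.mp hz
    obtain ⟨h, hh, rfl⟩ := mem_singleton_add''.mp (hXco hx')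
    rwa [show -g1 + (g1 + h) = h by abel]
  obtain ⟨Z1, ⟨hZ1, hg2Z1⟩, _⟩ := A.existsUnique_mem g2
  have hZ1Z : Z1 ⊆ Zs := block_subset_of_mem A hZA hZ1 hg2Z1 hg2Z
  have hXsub : X ⊆ ({g1} : Set G) + Z1 := by
    apply block_subset_of_mem A (translate_block A hbg1 hZ1) hX hx
    exact mem_singleton_add''.mpr ⟨g2, hg2Z1, hg12.symm⟩
  refine ⟨g1, hg1, hbg1, Z1, hZ1, fun z hz => hZH2 (hZ1Z hz), ?_⟩
  apply Set.Subset.antisymm hXsub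
  intro w hw
  obtain ⟨z, hz, rfl⟩ := mem_singleton_add''.mp hw
  obtain ⟨x', hx', hzx⟩ := mem_singleton_add''.mp (hZ1Z hz)
  rw [hzx, show g1 + (-g1 + x') = x' by abel]
  exact hx'

end Statement19Aux

/-- Let `A` be an S-ring over an abelian group `G = G1 × G2` with
`G1`, `G2` `A`-subgroups. If `A_{G1}` or `A_{G2}` is the group ring, then
`A = A_{G1} ⊗ A_{G2}`: every basic set of `A` is of the form `Y + Z` with `Y`, `Z`
basic sets contained in `G1`, `G2` respectively. -/
theorem statement19 (G : Type*) [AddCommGroup G] [Finite G]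
    (G1 G2 : AddSubgroup G) (hinf : G1 ⊓ G2 = ⊥) (hsup : G1 ⊔ G2 = ⊤)
    (A : SRing G) (h1 : IsASubgroup A.blocks G1) (h2 : IsASubgroup A.blocks G2)
    (hZ : (∀ X ∈ A.blocks, X ⊆ (G1 : Set G) → ∃ x : G, X = {x}) ∨
          (∀ X ∈ A.blocks, X ⊆ (G2 : Set G) → ∃ x : G, X = {x})) :
    ∀ X ∈ A.blocks, ∃ Y ∈ A.blocks, Y ⊆ (G1 : Set G) ∧
      ∃ Z ∈ A.blocks, Z ⊆ (G2 : Set G) ∧ X = Y + Z := by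
  cases hZ with
  | inl hZ1 =>
    intro X hX
    obtain ⟨g1, hg1, hbg1, Z, hZ, hZG2, hXeq⟩ :=
      key_statement19 A G1 G2 hsup h1 h2 hZ1 X hX
    exact ⟨{g1}, hbg1, Set.singleton_subset_iff.mpr hg1, Z, hZ, hZG2, hXeq⟩
  | inr hZ2 =>
    intro X hX
    obtain ⟨g2, hg2, hbg2, Z, hZ, hZG1, hXeq⟩ :=
      key_statement19 A G2 G1 (by rwa [sup_comm]) h2 h1 hZ2 X hX
    exact ⟨Z, hZ, hZG1, {g2}, hbg2, Set.singleton_subset_iff.mpr hg2,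
      by rw [hXeq, add_comm]⟩
end
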